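/- Let P be an n-dimensional polytope in ℝ^n with a vertex at the origin w = 0, let w_1,...,w_k be all vertices of P connected to w by an edge, and let W: Cone(w_1,...,w_k) → ℝ be the maximum weight function W(x) = max{ Σ a_i : x = Σ a_i w_i, a_i ≥ 0 }. Then W(z) ≥ 1 for every vertex z of P distinct from w. -/

import Mathlib

open Finset

noncomputable section

/-- Cast an integer vector to a real vector. -/
def castZ {n : ℕ} (u : Fin n → ℤ) : Fin n → ℝ := fun j => (u j : ℝ)

/-- Membership in the cone spanned by the vectors `w`. -/
def inCone {n m : ℕ} (w : Fin m → (Fin n → ℝ)) (x : Fin n → ℝ) : Prop :=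
  ∃ a : Fin m → ℝ, (∀ i, 0 ≤ a i) ∧ x = ∑ i, a i • w i

/-- The set of total weights of nonnegative representations of `x` in terms of `w`. -/
def weightSet {n m : ℕ} (w : Fin m → (Fin n → ℝ)) (x : Fin n → ℝ) : Set ℝ :=
  { t | ∃ a : Fin m → ℝ, (∀ i, 0 ≤ a i) ∧ x = ∑ i, a i • w i ∧ t = ∑ i, a i }

/-- The maximum weight function `W`. -/
def maxWeight {n m : ℕ} (w : Fin m → (Fin n → ℝ)) (x : Fin n → ℝ) : ℝ :=
  sSup (weightSet w x)

/-- A lattice vector is primitive. -/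
def Primitive {n : ℕ} (v : Fin n → ℤ) : Prop :=
  v ≠ 0 ∧ ∀ (z : ℤ) (q : Fin n → ℤ), 0 < z → v = z • q → z = 1

/-- Lattice points of the cone. -/
def latticeInCone {n m : ℕ} (w : Fin m → (Fin n → ℤ)) (u : Fin n → ℤ) : Prop :=
  inCone (fun i => castZ (w i)) (castZ u)

/-- `χ^u ∈ m_Q^k` : `u` is a sum of `k` nonzero lattice points of the cone plus a
lattice point of the cone. -/
def inPowM {n m : ℕ} (w : Fin m → (Fin n → ℤ)) (u : Fin n → ℤ) (k : ℕ) : Prop :=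
  ∃ v : Fin k → (Fin n → ℤ), (∀ i, latticeInCone w (v i) ∧ v i ≠ 0) ∧
    latticeInCone w (u - ∑ i, v i)

/-- `k_u` : the largest `k` such that `χ^u ∈ m_Q^k`. -/
def kU {n m : ℕ} (w : Fin m → (Fin n → ℤ)) (u : Fin n → ℤ) : ℕ :=
  sSup {k | inPowM w u k}

/-- Lattice points of the fundamental box `S_Q`. -/
def inBox {n m : ℕ} (w : Fin m → (Fin n → ℤ)) (u : Fin n → ℤ) : Prop :=
  ∃ a : Fin m → ℝ, (∀ i, 0 ≤ a i ∧ a i < 1) ∧ castZ u = ∑ i, a i • castZ (w i)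

/-- The constant `Γ_Q`. -/
def gammaQ {n m : ℕ} (w : Fin m → (Fin n → ℤ)) : ℝ :=
  sSup { x | ∃ u, inBox w u ∧
    x = maxWeight (fun i => castZ (w i)) (castZ u) - (kU w u : ℝ) }

end

/-- `v` is a vertex (extreme point) of `P`. -/
def IsVertex {n : ℕ} (P : Set (Fin n → ℝ)) (v : Fin n → ℝ) : Prop :=
  v ∈ Set.extremePoints ℝ P

/-- `v` and `w` are distinct vertices of `P` connected by an edge, i.e. the segment
joining them is a one-dimensional extreme (face) subset of `P`. -/
def IsEdge {n : ℕ} (P : Set (Fin n → ℝ)) (v w : Fin n → ℝ) : Prop :=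
  v ≠ w ∧ IsVertex P v ∧ IsVertex P w ∧ IsExtreme ℝ P (segment ℝ v w)

/-- Let `P` be an `n`-dimensional polytope with the origin as a vertex and
let `w₁,...,w_k` be precisely the vertices of `P` joined to the origin by an edge, so
that `P` is contained in the cone they span.  Then the maximum weight function `W`
satisfies `W(z) ≥ 1` for every vertex `z ≠ 0` of `P`. -/
theorem vertex_weight_ge_one {n k : ℕ} (V : Finset (Fin n → ℝ))
    (P : Set (Fin n → ℝ)) (hP : P = convexHull ℝ (V : Set (Fin n → ℝ)))
    (hfull : affineSpan ℝ P = ⊤)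
    (h0 : IsVertex P 0)
    (w : Fin k → (Fin n → ℝ))
    (hw : ∀ x, IsEdge P 0 x ↔ ∃ i, x = w i)
    (hPcone : P ⊆ {x | inCone w x})
    (hmax : ∀ x, inCone w x → IsGreatest (weightSet w x) (maxWeight w x))
    (z : Fin n → ℝ) (hz : IsVertex P z) (hz0 : z ≠ 0) :
    1 ≤ maxWeight w z := by
  have hzP : z ∈ P := hz.1
  obtain ⟨a, ha0, hrep, hsum⟩ := (hmax z (hPcone hzP)).1
  by_contra hlt
  push_neg at hlt
  rw [hsum] at hlt
  set s := ∑ i, a i with hs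
  rcases eq_or_lt_of_le (Finset.sum_nonneg fun i _ => ha0 i) with h0s | h0s
  · -- s = 0 : all coefficients vanish, so z = 0
    have hall : ∀ i ∈ Finset.univ, a i = 0 :=
      (Finset.sum_eq_zero_iff_of_nonneg fun i _ => ha0 i).mp h0s.symm
    apply hz0
    rw [hrep]
    apply Finset.sum_eq_zero
    intro i hi
    rw [hall i hi, zero_smul]
  · -- 0 < s < 1 : z is interior to a segment in P, contradicting extremeness
    have hconv : Convex ℝ P := hP ▸ convex_convexHull ℝ _
    have hwP : ∀ i, w i ∈ P := fun i => (((hw (w i)).mpr ⟨i, rfl⟩).2.2.1).1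
    have hyP : (∑ i, (a i / s) • w i) ∈ P := by
      apply hconv.sum_mem (fun i _ => div_nonneg (ha0 i) h0s.le)
      · rw [← Finset.sum_div, ← hs, div_self (ne_of_gt h0s)]
      · exact fun i _ => hwP i
    have h0P : (0 : Fin n → ℝ) ∈ P := h0.1
    have hseg : z ∈ openSegment ℝ (∑ i, (a i / s) • w i) 0 := by
      refine ⟨s, 1 - s, h0s, by linarith, by ring, ?_⟩
      rw [smul_zero, add_zero, Finset.smul_sum, hrep]
      apply Finset.sum_congr rfl
      intro i _
      rw [smul_smul, mul_div_cancel₀ _ (ne_of_gt h0s)]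
    exact hz0 (hz.2 h0P hyP (by rw [openSegment_symm]; exact hseg)).symm
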